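/- Let M be a matroid on ground set [n] of rank k−r, where 0 ≤ r ≤ k < n. Then M is a quotient of the uniform matroid U_{k,n} if and only if every k-element subset A ⊆ [n] satisfies rk_M(A) = k−r. -/

import Mathlib

open Finset

attribute [local instance] Classical.propDecidable

noncomputable section

/-- A matroid on `Fin n`, presented by its collection of bases (basis exchange axiom). -/
structure FinMatroid (n : ℕ) where
  bases : Finset (Finset (Fin n))
  bases_nonempty : bases.Nonempty
  exchange : ∀ B₁ ∈ bases, ∀ B₂ ∈ bases, ∀ x ∈ B₁ \ B₂,
      ∃ y ∈ B₂ \ B₁, insert y (B₁.erase x) ∈ bases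

/-- Rank function associated to a collection of bases: `rk S = max |S ∩ B|`. -/
def rkOf {n : ℕ} (Bs : Finset (Finset (Fin n))) (S : Finset (Fin n)) : ℕ :=
  Bs.sup fun B => (S ∩ B).card

/-- Rank function of a matroid. -/
def rk {n : ℕ} (M : FinMatroid n) (S : Finset (Fin n)) : ℕ := rkOf M.bases S

/-- Independence w.r.t. a collection of bases. -/
def Indep {n : ℕ} (Bs : Finset (Finset (Fin n))) (S : Finset (Fin n)) : Prop :=
  ∃ B ∈ Bs, S ⊆ B

/-- A circuit: a dependent set all of whose proper subsets are independent. -/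
def IsCircuit {n : ℕ} (Bs : Finset (Finset (Fin n))) (C : Finset (Fin n)) : Prop :=
  ¬ Indep Bs C ∧ ∀ D ⊆ C, D ≠ C → Indep Bs D

/-- `M` is a quotient of `N`: every circuit of `N` is a union of circuits of `M`. -/
def IsQuotient {n : ℕ} (BsM BsN : Finset (Finset (Fin n))) : Prop :=
  ∀ C, IsCircuit BsN C → ∃ 𝒟 : Finset (Finset (Fin n)),
    (∀ D ∈ 𝒟, IsCircuit BsM D) ∧ C = 𝒟.sup id

/-- The values of a finset under the key `f`, sorted increasingly. -/
def sortedVals {n : ℕ} (f : Fin n → ℕ) (A : Finset (Fin n)) : List ℕ :=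
  (A.image f).sort (· ≤ ·)

/-- Gale order (w.r.t. the total order on `Fin n` given by an injective key `f`):
`A ≤ B` iff the `i`-th smallest element of `A` is `≤` the `i`-th smallest element of `B`. -/
def galeLE {n : ℕ} (f : Fin n → ℕ) (A B : Finset (Fin n)) : Prop :=
  List.Forall₂ (· ≤ ·) (sortedVals f A) (sortedVals f B)

/-- Position of `a` in the cyclic order starting at `i` (so `cpos i i = 0`). -/
def cpos {n : ℕ} (i a : Fin n) : ℕ := ((a - i : Fin n) : ℕ)

/-- Cyclic half-open interval `(a, b]`; in particular `(a, a] = ∅`. -/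
def cycIoc {n : ℕ} (a b : Fin n) : Finset (Fin n) :=
  Finset.univ.filter fun x => cpos a x ≠ 0 ∧ cpos a x ≤ cpos a b

/-- Cyclic closed interval `[a, b]`. -/
def cycIcc {n : ℕ} (a b : Fin n) : Finset (Fin n) :=
  Finset.univ.filter fun x => cpos a x ≤ cpos a b

/-- A decorated permutation: a permutation together with a coloring in `{0, ±1}`
whose zero set is exactly the set of non-fixed points. -/
structure DecoratedPerm (n : ℕ) where
  perm : Equiv.Perm (Fin n)
  col : Fin n → ℤ
  col_range : ∀ i, col i = 0 ∨ col i = 1 ∨ col i = -1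
  col_zero_iff : ∀ i, col i = 0 ↔ perm i ≠ i

/-- Grassmann necklace term `I_i = {a : a <_i π⁻¹(a) or col a = -1}`. -/
def neck {n : ℕ} (π : DecoratedPerm n) (i : Fin n) : Finset (Fin n) :=
  Finset.univ.filter fun a => cpos i a < cpos i (π.perm.symm a) ∨ π.col a = -1

/-- Grassmann conecklace term `J_i = π⁻¹(I_i)`. -/
def coneck {n : ℕ} (π : DecoratedPerm n) (i : Fin n) : Finset (Fin n) :=
  (neck π i).image π.perm.symm

/-- Rank of a decorated permutation: the common size of its necklace terms. -/
def drank {n : ℕ} (π : DecoratedPerm n) : ℕ :=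
  if h : 0 < n then (neck π ⟨0, h⟩).card else 0

/-- Grassmann interval `S^π_i = (π⁻¹(i), i]`, with the coloop convention `[n]`
(the loop convention `∅` is automatic since `(i, i] = ∅`). -/
def SInt {n : ℕ} (π : DecoratedPerm n) (i : Fin n) : Finset (Fin n) :=
  if π.col i = -1 then Finset.univ else cycIoc (π.perm.symm i) i

/-- Shift interval `S^{π,σ}_i = (π⁻¹(i), σ⁻¹(i)]`, with the convention `[n]` when
`i` is a loop of `π` and a coloop of `σ`. -/
def shiftInt {n : ℕ} (π σ : DecoratedPerm n) (i : Fin n) : Finset (Fin n) :=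
  if π.col i = 1 ∧ σ.col i = -1 then Finset.univ
  else cycIoc (π.perm.symm i) (σ.perm.symm i)

/-- CW-arrow starting at `i`: the cyclic interval from `i` to `π(i)` (all of `[n]` for coloops). -/
def cwArrow {n : ℕ} (π : DecoratedPerm n) (i : Fin n) : Finset (Fin n) :=
  if π.col i = -1 then Finset.univ
  else Finset.univ.filter fun j => cpos i j ≤ cpos i (π.perm i)

/-- The CW-function: the number of CW-arrows contained in `A` (for `A ≠ [n]`),
and `n - rk(M)` for `A = [n]`. -/
def cw {n : ℕ} (π : DecoratedPerm n) (A : Finset (Fin n)) : ℕ :=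
  if A = Finset.univ then n - drank π
  else (Finset.univ.filter fun i => cwArrow π i ⊆ A).card

/-- Bases of the positroid associated with a decorated permutation: sets that are
above every necklace term in the corresponding cyclic Gale order. -/
def positroidBases {n : ℕ} (π : DecoratedPerm n) : Finset (Finset (Fin n)) :=
  Finset.univ.filter fun B => ∀ i, galeLE (cpos i) (neck π i) B

/-- `σ` is the cyclic shift `ρ_A(π)`: positions in `A` are frozen; at a position
`i ∉ A` the new value is `π(j)` where `j` is the maximum of `Aᶜ` in the cyclic order
starting at `i`; new fixed points are decorated as loops. -/
def IsCyclicShift {n : ℕ} (π σ : DecoratedPerm n) (A : Finset (Fin n)) : Prop :=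
  (∀ i ∈ A, σ.perm i = π.perm i ∧ σ.col i = π.col i) ∧
  (∀ i ∉ A, ∃ j, j ∉ A ∧ (∀ j', j' ∉ A → cpos i j' ≤ cpos i j) ∧ σ.perm i = π.perm j) ∧
  (∀ i ∉ A, σ.col i = if σ.perm i = i then 1 else 0)

/-- The shift intervals `S^{π,σ}_i` partition `[n]`. -/
def ShiftPartition {n : ℕ} (π σ : DecoratedPerm n) : Prop :=
  (∀ i j : Fin n, i ≠ j → Disjoint (shiftInt π σ i) (shiftInt π σ j)) ∧
  Finset.univ.biUnion (shiftInt π σ) = Finset.univ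

/-- `C` is a cyclic component of `A`: a maximal cyclic interval contained in `A`. -/
def IsCycComponent {n : ℕ} [NeZero n] (A C : Finset (Fin n)) : Prop :=
  ∃ a b : Fin n, C = cycIcc a b ∧ C ⊆ A ∧ (a - 1) ∉ A ∧ (b + 1) ∉ A

/-- Bases of the lattice path matroid `M[U, L]`. -/
def lpmBases {n : ℕ} (U L : Finset (Fin n)) : Finset (Finset (Fin n)) :=
  Finset.univ.filter fun B => galeLE Fin.val U B ∧ galeLE Fin.val B L
end

section stmt0aux

variable {n : ℕ}

lemma indep_subset' {Bs : Finset (Finset (Fin n))} {I J : Finset (Fin n)}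
    (hJ : Indep Bs J) (h : I ⊆ J) : Indep Bs I := by
  obtain ⟨B, hB, hJB⟩ := hJ; exact ⟨B, hB, h.trans hJB⟩

lemma rkOf_mono' {Bs : Finset (Finset (Fin n))} {A A' : Finset (Fin n)} (h : A ⊆ A') :
    rkOf Bs A ≤ rkOf Bs A' :=
  Finset.sup_le fun B hB =>
    le_trans (Finset.card_le_card (Finset.inter_subset_inter h (Finset.Subset.refl B)))
      (Finset.le_sup (f := fun B => (A' ∩ B).card) hB)

lemma exists_rk_basis' {Bs : Finset (Finset (Fin n))} (hne : Bs.Nonempty) (A : Finset (Fin n)) :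
    ∃ B ∈ Bs, (A ∩ B).card = rkOf Bs A := by
  obtain ⟨B, hB, h⟩ := Finset.exists_mem_eq_sup Bs hne (fun B => (A ∩ B).card)
  exact ⟨B, hB, h.symm⟩

lemma indep_card_le_rk' {Bs : Finset (Finset (Fin n))} {I A : Finset (Fin n)}
    (hI : Indep Bs I) (hIA : I ⊆ A) : I.card ≤ rkOf Bs A := by
  obtain ⟨B, hB, hIB⟩ := hI
  calc I.card ≤ (A ∩ B).card := Finset.card_le_card (Finset.subset_inter hIA hIB)
    _ ≤ _ := Finset.le_sup (f := fun B => (A ∩ B).card) hB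

lemma dep_has_circuit' {Bs : Finset (Finset (Fin n))} :
    ∀ C : Finset (Fin n), ¬ Indep Bs C → ∃ D, D ⊆ C ∧ IsCircuit Bs D := by
  intro C
  induction C using Finset.strongInductionOn with
  | _ C ih =>
    intro hC
    by_cases h : ∀ D ⊆ C, D ≠ C → Indep Bs D
    · exact ⟨C, Finset.Subset.refl C, hC, h⟩
    · push_neg at h
      obtain ⟨D, hDC, hne, hdep⟩ := h
      obtain ⟨E, hED, hcirc⟩ := ih D (Finset.ssubset_iff_subset_ne.mpr ⟨hDC, hne⟩) hdep
      exact ⟨E, hED.trans hDC, hcirc⟩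

lemma basis_card_eq_aux' (M : FinMatroid n) :
    ∀ m : ℕ, ∀ B₁ B₂ : Finset (Fin n), B₁ ∈ M.bases → B₂ ∈ M.bases →
      (B₁ \ B₂).card = m → B₁.card = B₂.card := by
  intro m
  induction m with
  | zero =>
    intro B₁ B₂ h₁ h₂ hm
    have hsub : B₁ ⊆ B₂ := by
      rw [← Finset.sdiff_eq_empty_iff_subset]
      exact Finset.card_eq_zero.mp hm
    have hsub2 : B₂ ⊆ B₁ := by
      by_contra h
      obtain ⟨x, hx1, hx2⟩ := Finset.not_subset.mp h
      obtain ⟨y, hy, -⟩ := M.exchange B₂ h₂ B₁ h₁ x (Finset.mem_sdiff.mpr ⟨hx1, hx2⟩)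
      have hy' := Finset.mem_sdiff.mp hy
      exact hy'.2 (hsub hy'.1)
    exact le_antisymm (Finset.card_le_card hsub) (Finset.card_le_card hsub2)
  | succ m ih =>
    intro B₁ B₂ h₁ h₂ hm
    have hne : (B₁ \ B₂).Nonempty := by rw [← Finset.card_pos, hm]; omega
    obtain ⟨x, hx⟩ := hne
    obtain ⟨y, hy, hB'⟩ := M.exchange B₁ h₁ B₂ h₂ x hx
    have hxmem := Finset.mem_sdiff.mp hx
    have hymem := Finset.mem_sdiff.mp hy
    have hcard : (insert y (B₁.erase x)).card = B₁.card := by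
      rw [Finset.card_insert_of_notMem (fun h => hymem.2 (Finset.mem_of_mem_erase h)),
        Finset.card_erase_of_mem hxmem.1]
      have : 0 < B₁.card := Finset.card_pos.mpr ⟨x, hxmem.1⟩
      omega
    have hsd : insert y (B₁.erase x) \ B₂ = (B₁ \ B₂).erase x := by
      ext a
      simp only [Finset.mem_sdiff, Finset.mem_insert, Finset.mem_erase]
      constructor
      · rintro ⟨(rfl | ⟨hax, haB⟩), hab2⟩
        · exact absurd hymem.1 hab2
        · exact ⟨hax, haB, hab2⟩
      · rintro ⟨hax, haB, hab2⟩
        exact ⟨Or.inr ⟨hax, haB⟩, hab2⟩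
    have hm' : (insert y (B₁.erase x) \ B₂).card = m := by
      rw [hsd, Finset.card_erase_of_mem hx, hm]
      omega
    have := ih (insert y (B₁.erase x)) B₂ hB' h₂ hm'
    omega

lemma basis_card' (M : FinMatroid n) {B₁ B₂ : Finset (Fin n)}
    (h₁ : B₁ ∈ M.bases) (h₂ : B₂ ∈ M.bases) : B₁.card = B₂.card :=
  basis_card_eq_aux' M _ B₁ B₂ h₁ h₂ rfl

lemma basis_card_rk_univ' (M : FinMatroid n) {B : Finset (Fin n)} (hB : B ∈ M.bases) :
    B.card = rkOf M.bases Finset.univ := by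
  obtain ⟨B₀, hB₀, h⟩ := exists_rk_basis' M.bases_nonempty Finset.univ
  rw [Finset.univ_inter] at h
  rw [basis_card' M hB hB₀, h]

lemma aug' (M : FinMatroid n) {I J : Finset (Fin n)} (hI : Indep M.bases I)
    (hJ : Indep M.bases J) (hcard : I.card < J.card) :
    ∃ x ∈ J, x ∉ I ∧ Indep M.bases (insert x I) := by
  obtain ⟨B₁, hB₁, hIB₁⟩ := hI
  have hne : (M.bases.filter fun B => J ⊆ B).Nonempty := by
    obtain ⟨B, hB, hJB⟩ := hJ; exact ⟨B, Finset.mem_filter.mpr ⟨hB, hJB⟩⟩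
  obtain ⟨B₂, hB₂mem, hmin⟩ := Finset.exists_min_image _ (fun B => (B \ (J ∪ B₁)).card) hne
  rw [Finset.mem_filter] at hB₂mem
  obtain ⟨hB₂, hJB₂⟩ := hB₂mem
  have hB₂sub : B₂ ⊆ J ∪ B₁ := by
    by_contra hcon
    obtain ⟨x, hxB₂, hxn⟩ := Finset.not_subset.mp hcon
    have hxB₁ : x ∉ B₁ := fun h => hxn (Finset.mem_union_right _ h)
    have hxJ : x ∉ J := fun h => hxn (Finset.mem_union_left _ h)
    obtain ⟨y, hy, hB'⟩ := M.exchange B₂ hB₂ B₁ hB₁ x (Finset.mem_sdiff.mpr ⟨hxB₂, hxB₁⟩)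
    have hymem := Finset.mem_sdiff.mp hy
    have hJB' : J ⊆ insert y (B₂.erase x) := fun a ha =>
      Finset.mem_insert_of_mem (Finset.mem_erase.mpr ⟨fun h => hxJ (h ▸ ha), hJB₂ ha⟩)
    have hsd : (insert y (B₂.erase x)) \ (J ∪ B₁) = (B₂ \ (J ∪ B₁)).erase x := by
      ext a
      simp only [Finset.mem_sdiff, Finset.mem_insert, Finset.mem_erase, Finset.mem_union]
      constructor
      · rintro ⟨(rfl | ⟨hax, haB⟩), hun⟩
        · exact absurd (Or.inr hymem.1) hun
        · exact ⟨hax, haB, hun⟩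
      · rintro ⟨hax, haB, hun⟩
        exact ⟨Or.inr ⟨hax, haB⟩, hun⟩
    have hlt : ((insert y (B₂.erase x)) \ (J ∪ B₁)).card < (B₂ \ (J ∪ B₁)).card := by
      rw [hsd]
      exact Finset.card_erase_lt_of_mem (Finset.mem_sdiff.mpr ⟨hxB₂, hxn⟩)
    exact absurd (hmin _ (Finset.mem_filter.mpr ⟨hB', hJB'⟩)) (not_le.mpr hlt)
  by_cases hB₁sub : B₁ ⊆ I ∪ B₂
  · by_cases hex : ∃ y ∈ J, y ∉ I ∧ y ∈ B₁
    · obtain ⟨y, hyJ, hyI, hyB₁⟩ := hex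
      exact ⟨y, hyJ, hyI, ⟨B₁, hB₁, Finset.insert_subset hyB₁ hIB₁⟩⟩
    · exfalso
      push_neg at hex
      have h1 : B₁ \ B₂ = I \ B₂ := by
        apply Finset.Subset.antisymm
        · intro a ha
          have ha' := Finset.mem_sdiff.mp ha
          rcases Finset.mem_union.mp (hB₁sub ha'.1) with h | h
          · exact Finset.mem_sdiff.mpr ⟨h, ha'.2⟩
          · exact absurd h ha'.2
        · intro a ha
          have ha' := Finset.mem_sdiff.mp ha
          exact Finset.mem_sdiff.mpr ⟨hIB₁ ha'.1, ha'.2⟩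
      have h2 : J \ I ⊆ B₂ \ B₁ := by
        intro a ha
        have ha' := Finset.mem_sdiff.mp ha
        exact Finset.mem_sdiff.mpr ⟨hJB₂ ha'.1, hex a ha'.1 ha'.2⟩
      have h3 : I \ B₂ ⊆ I \ J := fun a ha => by
        have ha' := Finset.mem_sdiff.mp ha
        exact Finset.mem_sdiff.mpr ⟨ha'.1, fun h => ha'.2 (hJB₂ h)⟩
      have e1 : (B₁ \ B₂).card = (B₂ \ B₁).card := by
        have hbc := basis_card' M hB₁ hB₂
        have c1 := Finset.card_sdiff_add_card_inter B₁ B₂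
        have c2 := Finset.card_sdiff_add_card_inter B₂ B₁
        rw [Finset.inter_comm] at c2
        omega
      have e2 : (I \ J).card < (J \ I).card := by
        have c1 := Finset.card_sdiff_add_card_inter I J
        have c2 := Finset.card_sdiff_add_card_inter J I
        rw [Finset.inter_comm] at c2
        omega
      have c2 := Finset.card_le_card h2
      have c3 := Finset.card_le_card h3
      rw [h1] at e1
      omega
  · obtain ⟨x, hxB₁, hxn⟩ := Finset.not_subset.mp hB₁sub
    have hxB₂ : x ∉ B₂ := fun h => hxn (Finset.mem_union_right _ h)
    have hxI : x ∉ I := fun h => hxn (Finset.mem_union_left _ h)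
    obtain ⟨y, hy, hB'⟩ := M.exchange B₁ hB₁ B₂ hB₂ x (Finset.mem_sdiff.mpr ⟨hxB₁, hxB₂⟩)
    have hymem := Finset.mem_sdiff.mp hy
    have hyJ : y ∈ J := by
      rcases Finset.mem_union.mp (hB₂sub hymem.1) with h | h
      · exact h
      · exact absurd h hymem.2
    have hyI : y ∉ I := fun h => hymem.2 (hIB₁ h)
    refine ⟨y, hyJ, hyI, ⟨insert y (B₁.erase x), hB', ?_⟩⟩
    intro a ha
    rcases Finset.mem_insert.mp ha with rfl | haI
    · exact Finset.mem_insert_self _ _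
    · exact Finset.mem_insert_of_mem (Finset.mem_erase.mpr ⟨fun h => hxI (h ▸ haI), hIB₁ haI⟩)

lemma grow' (M : FinMatroid n) :
    ∀ d : ℕ, ∀ I A : Finset (Fin n), Indep M.bases I → I ⊆ A →
      rkOf M.bases A ≤ I.card + d →
      ∃ I', I ⊆ I' ∧ I' ⊆ A ∧ Indep M.bases I' ∧ I'.card = rkOf M.bases A := by
  intro d
  induction d with
  | zero =>
    intro I A hI hIA hle
    refine ⟨I, Finset.Subset.refl I, hIA, hI, ?_⟩
    have := indep_card_le_rk' hI hIA
    omega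
  | succ d ih =>
    intro I A hI hIA hle
    by_cases hcard : I.card < rkOf M.bases A
    · obtain ⟨B, hB, hBcard⟩ := exists_rk_basis' M.bases_nonempty A
      have hJindep : Indep M.bases (A ∩ B) := ⟨B, hB, Finset.inter_subset_right⟩
      obtain ⟨x, hxJ, hxI, hins⟩ := aug' M hI hJindep (by omega)
      have hxA : x ∈ A := (Finset.mem_inter.mp hxJ).1
      have h1 : insert x I ⊆ A := Finset.insert_subset hxA hIA
      have h2 : (insert x I).card = I.card + 1 := Finset.card_insert_of_notMem hxI
      obtain ⟨I', hII', rest⟩ := ih (insert x I) A hins h1 (by omega)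
      exact ⟨I', (Finset.subset_insert x I).trans hII', rest⟩
    · have := indep_card_le_rk' hI hIA
      exact ⟨I, Finset.Subset.refl I, hIA, hI, by omega⟩

lemma indepU' {k : ℕ} (hk : k ≤ n) {S : Finset (Fin n)} :
    Indep (Finset.univ.filter fun B : Finset (Fin n) => B.card = k) S ↔ S.card ≤ k := by
  constructor
  · rintro ⟨B, hB, hSB⟩
    rw [Finset.mem_filter] at hB
    exact hB.2 ▸ Finset.card_le_card hSB
  · intro h
    obtain ⟨B, hSB, -, hBcard⟩ :=
      Finset.exists_subsuperset_card_eq (Finset.subset_univ S) h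
        (by simpa using hk)
    exact ⟨B, Finset.mem_filter.mpr ⟨Finset.mem_univ B, hBcard⟩, hSB⟩

lemma circuitU' {k : ℕ} (hk : k < n) {C : Finset (Fin n)} :
    IsCircuit (Finset.univ.filter fun B : Finset (Fin n) => B.card = k) C ↔ C.card = k + 1 := by
  constructor
  · rintro ⟨hdep, hmin⟩
    have h1 : k + 1 ≤ C.card := by
      by_contra h
      exact hdep ((indepU' hk.le).mpr (by omega))
    obtain ⟨D, hDC, hDcard⟩ := Finset.exists_subset_card_eq h1
    by_cases hDeq : D = C
    · rw [← hDeq]; exact hDcard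
    · have := (indepU' hk.le).mp (hmin D hDC hDeq)
      omega
  · intro hC
    refine ⟨fun h => by have := (indepU' hk.le).mp h; omega, fun D hDC hne => ?_⟩
    have : D ⊂ C := Finset.ssubset_iff_subset_ne.mpr ⟨hDC, hne⟩
    have := Finset.card_lt_card this
    exact (indepU' hk.le).mpr (by omega)

end stmt0aux

/-- A matroid `M` of rank `k - r` on `[n]` is a quotient of the uniform
matroid `U_{k,n}` iff every `k`-element subset has rank `k - r` in `M`. -/
theorem stmt0 (n k r : ℕ) (hr : r ≤ k) (hk : k < n)
    (M U : FinMatroid n)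
    (hU : U.bases = Finset.univ.filter fun B : Finset (Fin n) => B.card = k)
    (hM : rk M Finset.univ = k - r) :
    IsQuotient M.bases U.bases ↔
      ∀ A : Finset (Fin n), A.card = k → rk M A = k - r := by
  have hM' : rkOf M.bases Finset.univ = k - r := hM
  constructor
  · -- quotient → all k-sets have full rank
    intro hq A hA
    show rkOf M.bases A = k - r
    refine le_antisymm ((rkOf_mono' (Finset.subset_univ A)).trans_eq hM') ?_
    by_contra hle
    push_neg at hle
    obtain ⟨B, hB, hBcard⟩ := exists_rk_basis' M.bases_nonempty A
    have hBfull : B.card = k - r := (basis_card_rk_univ' M hB).trans hM'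
    have hlt' : (A ∩ B).card < B.card := by omega
    have hnsub : ¬ B ⊆ A := by
      intro h
      have : A ∩ B = B := Finset.inter_eq_right.mpr h
      rw [this] at hlt'; omega
    obtain ⟨x, hxB, hxA⟩ := Finset.not_subset.mp hnsub
    have hCcard : (insert x A).card = k + 1 := by
      rw [Finset.card_insert_of_notMem hxA, hA]
    have hCcirc : IsCircuit U.bases (insert x A) := by
      rw [hU]; exact (circuitU' hk).mpr hCcard
    obtain ⟨𝒟, hD, hsup⟩ := hq (insert x A) hCcirc
    have hxC : x ∈ 𝒟.sup id := by
      rw [← hsup]; exact Finset.mem_insert_self x A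
    obtain ⟨D, hD𝒟, hxD⟩ := Finset.mem_sup.mp hxC
    have hDcirc := hD D hD𝒟
    have hDC : D ⊆ insert x A := by
      rw [hsup]; exact Finset.le_sup (f := id) hD𝒟
    have hIindep : Indep M.bases (D.erase x) :=
      hDcirc.2 _ (Finset.erase_subset x D) (fun h => absurd hxD (Finset.erase_eq_self.mp h))
    have hIA : D.erase x ⊆ A := by
      intro a ha
      have h1 := Finset.mem_erase.mp ha
      rcases Finset.mem_insert.mp (hDC h1.2) with h | h
      · exact absurd h h1.1
      · exact h
    obtain ⟨I', hII', hI'A, hI'indep, hI'card⟩ :=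
      grow' M (rkOf M.bases A) _ A hIindep hIA (by omega)
    have hJindep : Indep M.bases (insert x A ∩ B) := ⟨B, hB, Finset.inter_subset_right⟩
    have hJcard : (insert x A ∩ B).card = rkOf M.bases A + 1 := by
      rw [Finset.insert_inter_of_mem hxB,
        Finset.card_insert_of_notMem (fun h => hxA (Finset.mem_inter.mp h).1), hBcard]
    obtain ⟨y, hyJ, hyI', hyins⟩ := aug' M hI'indep hJindep (by omega)
    have hyC : y ∈ insert x A := (Finset.mem_inter.mp hyJ).1
    have hyx : y = x := by
      by_contra hne
      have hyA : y ∈ A := by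
        rcases Finset.mem_insert.mp hyC with h | h
        · exact absurd h hne
        · exact h
      have hle2 : (insert y I').card ≤ rkOf M.bases A :=
        indep_card_le_rk' hyins (Finset.insert_subset hyA hI'A)
      rw [Finset.card_insert_of_notMem hyI'] at hle2
      omega
    subst hyx
    have hD_sub : D ⊆ insert y I' := by
      intro a ha
      by_cases hay : a = y
      · exact hay ▸ Finset.mem_insert_self _ _
      · exact Finset.mem_insert_of_mem (hII' (Finset.mem_erase.mpr ⟨hay, ha⟩))
    exact hDcirc.1 (indep_subset' hyins hD_sub)
  · -- all k-sets have full rank → quotient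
    intro h C hCcirc
    rw [hU] at hCcirc
    have hCcard : C.card = k + 1 := (circuitU' hk).mp hCcirc
    refine ⟨C.powerset.filter (IsCircuit M.bases),
      fun D hD => (Finset.mem_filter.mp hD).2, ?_⟩
    apply Finset.Subset.antisymm
    · intro x hxC
      have hAcard : (C.erase x).card = k := by
        rw [Finset.card_erase_of_mem hxC, hCcard]
        omega
      have hrkA : rkOf M.bases (C.erase x) = k - r := h _ hAcard
      obtain ⟨B, hB, hBcard⟩ := exists_rk_basis' M.bases_nonempty (C.erase x)
      have hsubC : insert x (C.erase x ∩ B) ⊆ C :=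
        Finset.insert_subset hxC (Finset.inter_subset_left.trans (Finset.erase_subset x C))
      have hdep : ¬ Indep M.bases (insert x (C.erase x ∩ B)) := by
        intro hind
        have hle := indep_card_le_rk' hind hsubC
        have hrkC : rkOf M.bases C ≤ k - r :=
          (rkOf_mono' (Finset.subset_univ C)).trans_eq hM'
        have hxAB : x ∉ C.erase x ∩ B :=
          fun hmem => (Finset.notMem_erase x C) ((Finset.mem_inter.mp hmem).1)
        rw [Finset.card_insert_of_notMem hxAB, hBcard, hrkA] at hle
        omega
      obtain ⟨D, hDsub, hDcirc⟩ := dep_has_circuit' _ hdep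
      have hxD : x ∈ D := by
        by_contra hxD
        have hsub : D ⊆ C.erase x ∩ B := fun a ha => by
          rcases Finset.mem_insert.mp (hDsub ha) with rfl | hmem
          · exact absurd ha hxD
          · exact hmem
        exact hDcirc.1 (indep_subset' ⟨B, hB, Finset.inter_subset_right⟩ hsub)
      have hDC : D ⊆ C := hDsub.trans hsubC
      have hDmem : D ∈ C.powerset.filter (IsCircuit M.bases) :=
        Finset.mem_filter.mpr ⟨Finset.mem_powerset.mpr hDC, hDcirc⟩
      exact (Finset.le_sup (f := id) hDmem : D ≤ _) hxD
    · intro x hx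
      obtain ⟨D, hD, hxD⟩ := Finset.mem_sup.mp hx
      exact Finset.mem_powerset.mp (Finset.mem_filter.mp hD).1 hxD
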